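/- arXiv:1809.09355 — 7 statements merged into one kernel-verified Lean document; each statement's English description precedes it below -/
import Mathlib

section
/- Let q : ℝ × ℝ → ℝ be a polynomial of total degree at most 5. Then the average of q over the rectangle [x₀ - Δx/2, x₀ + Δx/2] × [y₀ - Δy/2, y₀ + Δy/2] equals q(x₀,y₀) + (Δx²/24)·q_xx(x₀,y₀) + (Δy²/24)·q_yy(x₀,y₀) + (Δx⁴/1920)·q_xxxx(x₀,y₀) + (Δx²Δy²/576)·q_xxyy(x₀,y₀) + (Δy⁴/1920)·q_yyyy(x₀,y₀). -/
open MeasureTheory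

open intervalIntegral

/-- Partial derivative in the first variable. -/
noncomputable def pdx (f : ℝ → ℝ → ℝ) : ℝ → ℝ → ℝ := fun x y => deriv (fun x' => f x' y) x

/-- Partial derivative in the second variable. -/
noncomputable def pdy (f : ℝ → ℝ → ℝ) : ℝ → ℝ → ℝ := fun x y => deriv (fun y' => f x y') y


noncomputable def mono (c : ℝ) (a b : ℕ) : ℝ → ℝ → ℝ := fun x y => c * x ^ a * y ^ b

lemma pdx_mono (c : ℝ) (a b : ℕ) : pdx (mono c a b) = mono (c * a) (a - 1) b := by
  funext x y
  have h : (fun x' => mono c a b x' y) = fun x' => (c * y ^ b) * x' ^ a := by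
    funext x'; simp [mono]; ring
  simp only [pdx]
  rw [h, deriv_const_mul_field, deriv_pow_field]
  simp only [mono]; ring

lemma pdy_mono (c : ℝ) (a b : ℕ) : pdy (mono c a b) = mono (c * b) a (b - 1) := by
  funext x y
  have h : (fun y' => mono c a b x y') = fun y' => (c * x ^ a) * y' ^ b := by
    funext y'; simp [mono]
  simp only [pdy]
  rw [h, deriv_const_mul_field, deriv_pow_field]
  simp only [mono]; ring

lemma mono_diff (c : ℝ) (a b : ℕ) (y : ℝ) : Differentiable ℝ (fun x' => mono c a b x' y) := by
  simp only [mono]; fun_prop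

lemma mono_diff' (c : ℝ) (a b : ℕ) (x : ℝ) : Differentiable ℝ (fun y' => mono c a b x y') := by
  simp only [mono]; fun_prop

lemma mono_cont (c : ℝ) (a b : ℕ) (x : ℝ) : Continuous (fun y => mono c a b x y) := by
  simp only [mono]; fun_prop

lemma pdx_sum {ι : Type} (s : Finset ι) (c : ι → ℝ) (a b : ι → ℕ) :
    pdx (fun x y => ∑ d ∈ s, mono (c d) (a d) (b d) x y)
      = fun x y => ∑ d ∈ s, mono (c d * a d) (a d - 1) (b d) x y := by
  funext x y
  simp only [pdx]
  rw [deriv_fun_sum (fun d _ => (mono_diff (c d) (a d) (b d) y).differentiableAt)]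
  refine Finset.sum_congr rfl fun d _ => ?_
  have := congrFun (congrFun (pdx_mono (c d) (a d) (b d)) x) y
  simpa [pdx] using this

lemma pdy_sum {ι : Type} (s : Finset ι) (c : ι → ℝ) (a b : ι → ℕ) :
    pdy (fun x y => ∑ d ∈ s, mono (c d) (a d) (b d) x y)
      = fun x y => ∑ d ∈ s, mono (c d * b d) (a d) (b d - 1) x y := by
  funext x y
  simp only [pdy]
  rw [deriv_fun_sum (fun d _ => (mono_diff' (c d) (a d) (b d) x).differentiableAt)]
  refine Finset.sum_congr rfl fun d _ => ?_
  have := congrFun (congrFun (pdy_mono (c d) (a d) (b d)) x) y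
  simpa [pdy] using this

lemma mono_integral (c : ℝ) (a b : ℕ) (x1 x2 y1 y2 : ℝ) :
    ∫ x in x1..x2, ∫ y in y1..y2, mono c a b x y
      = c * ((x2 ^ (a+1) - x1 ^ (a+1)) / (a+1)) * ((y2 ^ (b+1) - y1 ^ (b+1)) / (b+1)) := by
  simp only [mono, intervalIntegral.integral_const_mul, intervalIntegral.integral_mul_const,
    integral_pow]

set_option maxHeartbeats 2000000 in
lemma mono_case (x₀ y₀ Δx Δy : ℝ) (hΔx : Δx ≠ 0) (hΔy : Δy ≠ 0) (c : ℝ) (a b : ℕ)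
    (hab : a + b ≤ 5) :
    (1 / (Δx * Δy)) *
        ∫ x in (x₀ - Δx / 2)..(x₀ + Δx / 2), ∫ y in (y₀ - Δy / 2)..(y₀ + Δy / 2), mono c a b x y
      = mono c a b x₀ y₀ + (Δx ^ 2 / 24) * pdx (pdx (mono c a b)) x₀ y₀
        + (Δy ^ 2 / 24) * pdy (pdy (mono c a b)) x₀ y₀
        + (Δx ^ 4 / 1920) * pdx (pdx (pdx (pdx (mono c a b)))) x₀ y₀
        + (Δx ^ 2 * Δy ^ 2 / 576) * pdx (pdx (pdy (pdy (mono c a b)))) x₀ y₀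
        + (Δy ^ 4 / 1920) * pdy (pdy (pdy (pdy (mono c a b)))) x₀ y₀ := by
  rw [mono_integral]
  simp only [pdx_mono, pdy_mono, mono]
  have ha : a ≤ 5 := le_trans (Nat.le_add_right a b) hab
  have hb : b ≤ 5 := le_trans (Nat.le_add_left b a) hab
  interval_cases a <;> interval_cases b <;>
    first
      | (exfalso; omega)
      | (rw [one_div, inv_mul_eq_div, div_eq_iff (mul_ne_zero hΔx hΔy)]; norm_num; ring)

lemma mono_inner (c : ℝ) (a b : ℕ) (x y1 y2 : ℝ) :
    (∫ y in y1..y2, mono c a b x y) = (c * ((y2 ^ (b+1) - y1 ^ (b+1)) / (b+1))) * x ^ a := by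
  simp only [mono]
  rw [intervalIntegral.integral_const_mul, integral_pow]
  ring

set_option maxHeartbeats 1000000 in
lemma sum_case {ι : Type} (s : Finset ι) (c : ι → ℝ) (a b : ι → ℕ)
    (hdeg : ∀ d ∈ s, a d + b d ≤ 5) (x₀ y₀ Δx Δy : ℝ) (hΔx : Δx ≠ 0) (hΔy : Δy ≠ 0)
    (f : ℝ → ℝ → ℝ) (hf : f = fun x y => ∑ d ∈ s, mono (c d) (a d) (b d) x y) :
    (1 / (Δx * Δy)) *
        ∫ x in (x₀ - Δx / 2)..(x₀ + Δx / 2), ∫ y in (y₀ - Δy / 2)..(y₀ + Δy / 2), f x y =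
      f x₀ y₀ + (Δx ^ 2 / 24) * pdx (pdx f) x₀ y₀ + (Δy ^ 2 / 24) * pdy (pdy f) x₀ y₀
        + (Δx ^ 4 / 1920) * pdx (pdx (pdx (pdx f))) x₀ y₀
        + (Δx ^ 2 * Δy ^ 2 / 576) * pdx (pdx (pdy (pdy f))) x₀ y₀
        + (Δy ^ 4 / 1920) * pdy (pdy (pdy (pdy f))) x₀ y₀ := by
  subst hf
  have hInner : ∀ x : ℝ,
      (∫ y in (y₀ - Δy / 2)..(y₀ + Δy / 2), ∑ d ∈ s, mono (c d) (a d) (b d) x y)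
        = ∑ d ∈ s, (c d * (((y₀ + Δy / 2) ^ (b d + 1) - (y₀ - Δy / 2) ^ (b d + 1)) / (b d + 1)))
            * x ^ (a d) := by
    intro x
    rw [intervalIntegral.integral_finset_sum
      (fun d _ => ((mono_cont (c d) (a d) (b d) x).intervalIntegrable _ _))]
    exact Finset.sum_congr rfl fun d _ => mono_inner _ _ _ _ _ _
  have hI : (∫ x in (x₀ - Δx / 2)..(x₀ + Δx / 2),
        ∫ y in (y₀ - Δy / 2)..(y₀ + Δy / 2), ∑ d ∈ s, mono (c d) (a d) (b d) x y)
      = ∑ d ∈ s, ∫ x in (x₀ - Δx / 2)..(x₀ + Δx / 2),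
          ∫ y in (y₀ - Δy / 2)..(y₀ + Δy / 2), mono (c d) (a d) (b d) x y := by
    simp only [hInner]
    rw [intervalIntegral.integral_finset_sum
      (fun d _ => ((continuous_const.fun_mul (continuous_pow (a d))).intervalIntegrable _ _))]
    refine Finset.sum_congr rfl fun d _ => ?_
    congr 1
    funext x
    rw [show (∫ y in (y₀ - Δy / 2)..(y₀ + Δy / 2), mono (c d) (a d) (b d) x y)
      = (c d * (((y₀ + Δy / 2) ^ (b d + 1) - (y₀ - Δy / 2) ^ (b d + 1)) / (b d + 1)))
        * x ^ (a d) from mono_inner _ _ _ _ _ _]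
  rw [hI, Finset.mul_sum]
  simp only [pdx_sum, pdy_sum]
  simp only [Finset.mul_sum]
  simp only [← Finset.sum_add_distrib]
  refine Finset.sum_congr rfl fun d hd => ?_
  have h := mono_case x₀ y₀ Δx Δy hΔx hΔy (c d) (a d) (b d) (hdeg d hd)
  simpa only [pdx_mono, pdy_mono] using h

theorem stmt_2 (q : MvPolynomial (Fin 2) ℝ) (hq : q.totalDegree ≤ 5)
    (x₀ y₀ Δx Δy : ℝ) (hΔx : 0 < Δx) (hΔy : 0 < Δy)
    (f : ℝ → ℝ → ℝ) (hf : f = fun x y => MvPolynomial.eval ![x, y] q) :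
    (1 / (Δx * Δy)) *
        ∫ x in (x₀ - Δx / 2)..(x₀ + Δx / 2), ∫ y in (y₀ - Δy / 2)..(y₀ + Δy / 2), f x y =
      f x₀ y₀ + (Δx ^ 2 / 24) * pdx (pdx f) x₀ y₀ + (Δy ^ 2 / 24) * pdy (pdy f) x₀ y₀
        + (Δx ^ 4 / 1920) * pdx (pdx (pdx (pdx f))) x₀ y₀
        + (Δx ^ 2 * Δy ^ 2 / 576) * pdx (pdx (pdy (pdy f))) x₀ y₀
        + (Δy ^ 4 / 1920) * pdy (pdy (pdy (pdy f))) x₀ y₀ := by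
  have hev : f = fun x y => ∑ d ∈ q.support, mono (q.coeff d) (d 0) (d 1) x y := by
    rw [hf]
    funext x y
    rw [MvPolynomial.eval_eq']
    refine Finset.sum_congr rfl fun d _ => ?_
    simp [mono, Fin.prod_univ_two, mul_assoc]
  have hdeg : ∀ d ∈ q.support, d 0 + d 1 ≤ 5 := by
    intro d hd
    have h1 := MvPolynomial.le_totalDegree hd
    rw [Finsupp.sum_fintype _ _ (fun _ => rfl), Fin.sum_univ_two] at h1
    omega
  exact sum_case q.support _ _ _ hdeg x₀ y₀ Δx Δy hΔx.ne' hΔy.ne' f hev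
end

section
/- Let q : ℝ → ℝ be a polynomial of degree at most 5, h > 0, and let Q(x) := (1/h)·∫_{x−h/2}^{x+h/2} q. Then (1/(8h²))·(−Q(x−2h) + 12·Q(x−h) − 22·Q(x) + 12·Q(x+h) − Q(x+2h)) = q''(x). -/
open Polynomial MeasureTheory

set_option maxHeartbeats 2000000 in
theorem stmt_7 (q : Polynomial ℝ) (hq : q.natDegree ≤ 5) (h : ℝ) (hh : 0 < h)
    (Q : ℝ → ℝ) (hQ : Q = fun x => (1 / h) * ∫ t in (x - h / 2)..(x + h / 2), q.eval t)
    (x : ℝ) :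
    (1 / (8 * h ^ 2)) *
        (-Q (x - 2 * h) + 12 * Q (x - h) - 22 * Q x + 12 * Q (x + h) - Q (x + 2 * h)) =
      (Polynomial.derivative^[2] q).eval x := by

  subst hQ
  have h6 : q.natDegree < 6 := lt_of_le_of_lt hq (by norm_num)
  have hint : ∀ a b : ℝ, (∫ t in a..b, q.eval t)
      = ∑ i ∈ Finset.range 6, q.coeff i * ((b ^ (i+1) - a ^ (i+1)) / ((i:ℝ)+1)) := by
    intro a b
    have he : ∀ t : ℝ, q.eval t = ∑ i ∈ Finset.range 6, q.coeff i * t ^ i :=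
      fun t => Polynomial.eval_eq_sum_range' h6 t
    simp_rw [he]
    rw [intervalIntegral.integral_finset_sum
      (fun i _ => (show Continuous fun t : ℝ => q.coeff i * t ^ i from
        continuous_const.mul (continuous_pow i)).intervalIntegrable a b)]
    refine Finset.sum_congr rfl fun i _ => ?_
    rw [intervalIntegral.integral_const_mul, integral_pow]
  have hrep : q = ∑ i ∈ Finset.range 6, Polynomial.monomial i (q.coeff i) :=
    (Polynomial.as_sum_range' q 6 h6)
  have hder : (Polynomial.derivative^[2] q).eval x
      = 2 * q.coeff 2 + 6 * q.coeff 3 * x + 12 * q.coeff 4 * x ^ 2 + 20 * q.coeff 5 * x ^ 3 := by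
    conv_lhs => rw [hrep]
    simp [Function.iterate_succ, Finset.sum_range_succ, Polynomial.derivative_monomial,
      Polynomial.eval_monomial]
    ring
  simp only [hint, hder, Finset.sum_range_succ, Finset.sum_range_zero]
  push_cast
  field_simp
  ring
end

section
/- Let q : ℝ → ℝ be a polynomial of degree at most 5, h > 0, and Q(x) := (1/h)·∫_{x−h/2}^{x+h/2} q. Then (1/h⁴)·(Q(x−2h) − 4·Q(x−h) + 6·Q(x) − 4·Q(x+h) + Q(x+2h)) = q''''(x). -/
set_option maxHeartbeats 1000000


open Polynomial MeasureTheory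

theorem stmt_8 (q : Polynomial ℝ) (hq : q.natDegree ≤ 5) (h : ℝ) (hh : 0 < h)
    (Q : ℝ → ℝ) (hQ : Q = fun x => (1 / h) * ∫ t in (x - h / 2)..(x + h / 2), q.eval t)
    (x : ℝ) :
    (1 / h ^ 4) *
        (Q (x - 2 * h) - 4 * Q (x - h) + 6 * Q x - 4 * Q (x + h) + Q (x + 2 * h)) =
      (Polynomial.derivative^[4] q).eval x := by
  have hrep : q = ∑ i ∈ Finset.range 6, Polynomial.monomial i (q.coeff i) :=
    q.as_sum_range' 6 (lt_of_le_of_lt hq (by norm_num))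
  set a0 := q.coeff 0; set a1 := q.coeff 1; set a2 := q.coeff 2
  set a3 := q.coeff 3; set a4 := q.coeff 4; set a5 := q.coeff 5
  have hqev : ∀ t : ℝ, q.eval t = a0 + a1*t + a2*t^2 + a3*t^3 + a4*t^4 + a5*t^5 := by
    intro t
    conv_lhs => rw [hrep]
    simp [Finset.sum_range_succ]
    rfl
  set P : Polynomial ℝ := Polynomial.C a0 * Polynomial.X + Polynomial.C (a1/2) * Polynomial.X^2
    + Polynomial.C (a2/3) * Polynomial.X^3 + Polynomial.C (a3/4) * Polynomial.X^4
    + Polynomial.C (a4/5) * Polynomial.X^5 + Polynomial.C (a5/6) * Polynomial.X^6 with hPdef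
  have hPev : ∀ t : ℝ, P.eval t = a0*t + a1/2*t^2 + a2/3*t^3 + a3/4*t^4 + a4/5*t^5 + a5/6*t^6 := by
    intro t; simp [hPdef]
  have hd : ∀ t : ℝ, P.derivative.eval t = q.eval t := by
    intro t
    rw [hqev t, hPdef]
    simp
    ring
  have hint : ∀ u v : ℝ, (∫ t in u..v, q.eval t) = P.eval v - P.eval u := by
    intro u v
    refine intervalIntegral.integral_eq_sub_of_hasDerivAt (f := fun s => P.eval s)
      (f' := fun s => q.eval s) (fun t _ => ?_) (q.continuous.intervalIntegrable u v)
    simpa [hd t] using P.hasDerivAt t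
  have hQval : ∀ y : ℝ, Q y = (1/h) * (P.eval (y + h/2) - P.eval (y - h/2)) := by
    intro y; rw [hQ]; simp only [hint]
  have hder : (Polynomial.derivative^[4] q).eval x = 24*a4 + 120*a5*x := by
    conv_lhs => rw [hrep]
    simp [Finset.sum_range_succ, Function.iterate_succ_apply', derivative_monomial]
    ring
  rw [hder]
  simp only [hQval, hPev]
  field_simp
  ring
end

section
/- Let u : ℝ × ℝ → ℝ be a polynomial in (y,z) of total degree at most 5, and for integers j,k let U(j,k) denote the average of u over the square [(j−1/2)h, (j+1/2)h] × [(k−1/2)h, (k+1/2)h]. Then the paper's sixth-order average-to-point formula u(0,0) ≈ U(0,0) − (1/1920)·[−9U(−2,0) + 116U(−1,0) − 214U(0,0) + 116U(1,0) − 9U(2,0)] − (1/1920)·[−9U(0,−2) + 116U(0,−1) − 214U(0,0) + 116U(0,1) − 9U(0,2)] + (1/576)·[(U(−1,−1) + U(1,−1) − 2U(0,−1)) + (U(−1,1) + U(1,1) − 2U(0,1)) − 2(U(−1,0) + U(1,0) − 2U(0,0))] holds with equality. -/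
open MeasureTheory intervalIntegral

noncomputable def fI (h : ℝ) (n : ℕ) (j : ℤ) : ℝ :=
  ((((j : ℝ) + 1 / 2) * h) ^ (n + 1) - (((j : ℝ) - 1 / 2) * h) ^ (n + 1)) / ((n : ℝ) + 1)

noncomputable def Eq6 (V : ℤ → ℤ → ℝ) : ℝ :=
  V 0 0
    - (1 / 1920) * (-9 * V (-2) 0 + 116 * V (-1) 0 - 214 * V 0 0 + 116 * V 1 0 - 9 * V 2 0)
    - (1 / 1920) * (-9 * V 0 (-2) + 116 * V 0 (-1) - 214 * V 0 0 + 116 * V 0 1 - 9 * V 0 2)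
    + (1 / 576) * ((V (-1) (-1) + V 1 (-1) - 2 * V 0 (-1))
      + (V (-1) 1 + V 1 1 - 2 * V 0 1)
      - 2 * (V (-1) 0 + V 1 0 - 2 * V 0 0))

theorem Eq6_add (V W : ℤ → ℤ → ℝ) :
    Eq6 (fun j k => V j k + W j k) = Eq6 V + Eq6 W := by
  simp only [Eq6]; ring

theorem Eq6_zero : Eq6 (fun _ _ => (0 : ℝ)) = 0 := by
  simp only [Eq6]; ring

theorem Eq6_sum {α : Type*} (s : Finset α) (f : α → ℤ → ℤ → ℝ) :
    Eq6 (fun j k => ∑ m ∈ s, f m j k) = ∑ m ∈ s, Eq6 (f m) := by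
  classical
  induction s using Finset.induction with
  | empty => simpa using Eq6_zero
  | insert _ _ hm ih =>
      rw [Finset.sum_insert hm, ← ih, ← Eq6_add]
      simp [Finset.sum_insert hm]

set_option maxHeartbeats 4000000 in
theorem key (h : ℝ) (hh : 0 < h) (a b : ℕ) (hab : a + b ≤ 5) :
    (0 : ℝ) ^ a * 0 ^ b = Eq6 (fun j k => (1 / (h * h)) * (fI h a j * fI h b k)) := by
  have hne : h ≠ 0 := ne_of_gt hh
  have ha : a ≤ 5 := by omega
  have hb : b ≤ 5 := by omega
  interval_cases a <;> interval_cases b <;>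
    first
      | (exfalso; omega)
      | (simp only [Eq6, fI]; norm_num; ring_nf; try field_simp; try ring_nf)

theorem stmt_9 (u : MvPolynomial (Fin 2) ℝ) (hu : u.totalDegree ≤ 5) (h : ℝ) (hh : 0 < h)
    (U : ℤ → ℤ → ℝ)
    (hU : U = fun (j k : ℤ) => (1 / (h * h)) *
        ∫ y in (((j : ℝ) - 1 / 2) * h)..(((j : ℝ) + 1 / 2) * h),
          ∫ z in (((k : ℝ) - 1 / 2) * h)..(((k : ℝ) + 1 / 2) * h),
            MvPolynomial.eval ![y, z] u) :
    MvPolynomial.eval ![(0 : ℝ), 0] u =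
      U 0 0
        - (1 / 1920) * (-9 * U (-2) 0 + 116 * U (-1) 0 - 214 * U 0 0 + 116 * U 1 0 - 9 * U 2 0)
        - (1 / 1920) * (-9 * U 0 (-2) + 116 * U 0 (-1) - 214 * U 0 0 + 116 * U 0 1 - 9 * U 0 2)
        + (1 / 576) * ((U (-1) (-1) + U 1 (-1) - 2 * U 0 (-1))
          + (U (-1) 1 + U 1 1 - 2 * U 0 1)
          - 2 * (U (-1) 0 + U 1 0 - 2 * U 0 0)) := by
  classical
  have heval : ∀ y z : ℝ, MvPolynomial.eval ![y, z] u
      = ∑ m ∈ u.support, MvPolynomial.coeff m u * (y ^ m 0 * z ^ m 1) := by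
    intro y z
    conv_lhs => rw [u.as_sum]
    rw [map_sum]
    refine Finset.sum_congr rfl fun m _ => ?_
    rw [MvPolynomial.eval_monomial]
    rw [Finsupp.prod_fintype _ _ (fun i => pow_zero _)]
    simp [Fin.prod_univ_two]
  have hinner : ∀ (y : ℝ) (k : ℤ),
      (∫ z in (((k : ℝ) - 1 / 2) * h)..(((k : ℝ) + 1 / 2) * h), MvPolynomial.eval ![y, z] u)
      = ∑ m ∈ u.support, MvPolynomial.coeff m u * y ^ m 0 * fI h (m 1) k := by
    intro y k
    simp_rw [heval]
    rw [intervalIntegral.integral_finset_sum]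
    · refine Finset.sum_congr rfl fun m _ => ?_
      have hfun : (fun z : ℝ => MvPolynomial.coeff m u * (y ^ m 0 * z ^ m 1))
          = fun z : ℝ => (MvPolynomial.coeff m u * y ^ m 0) * z ^ m 1 := by
        funext z; ring
      rw [hfun, intervalIntegral.integral_const_mul, integral_pow, fI]
    · intro m _
      exact ((continuous_const.mul (continuous_const.mul
        (continuous_pow (m 1)))).intervalIntegrable _ _)
  have hU' : ∀ j k : ℤ, U j k
      = ∑ m ∈ u.support, MvPolynomial.coeff m u *
          ((1 / (h * h)) * (fI h (m 0) j * fI h (m 1) k)) := by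
    intro j k
    rw [hU]
    simp only
    simp_rw [hinner]
    rw [intervalIntegral.integral_finset_sum]
    · rw [Finset.mul_sum]
      refine Finset.sum_congr rfl fun m _ => ?_
      have hfun : (fun y : ℝ => MvPolynomial.coeff m u * y ^ m 0 * fI h (m 1) k)
          = fun y : ℝ => (MvPolynomial.coeff m u * fI h (m 1) k) * y ^ m 0 := by
        funext y; ring
      rw [hfun, intervalIntegral.integral_const_mul, integral_pow, ← fI]
      ring
    · intro m _
      exact (((continuous_const.mul (continuous_pow (m 0))).mul
        continuous_const).intervalIntegrable _ _)
  have hUfun : U = fun j k => ∑ m ∈ u.support, MvPolynomial.coeff m u *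
      ((1 / (h * h)) * (fI h (m 0) j * fI h (m 1) k)) := by
    funext j k; exact hU' j k
  show _ = Eq6 U
  rw [hUfun, Eq6_sum, heval 0 0]
  refine Finset.sum_congr rfl fun m hm => ?_
  have hdeg : m 0 + m 1 ≤ 5 := by
    have h1 := MvPolynomial.le_totalDegree hm
    have h2 : (m.sum fun _ e => e) = m 0 + m 1 := by
      rw [Finsupp.sum_fintype _ _ (fun _ => rfl), Fin.sum_univ_two]
    omega
  have hk := key h hh (m 0) (m 1) hdeg
  have hsmul : ∀ (c : ℝ) (V : ℤ → ℤ → ℝ),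
      c * Eq6 V = Eq6 (fun j k => c * V j k) := by
    intro c V; simp only [Eq6]; ring
  rw [hk, hsmul]
end

section
/- For a C⁶ function q : ℝ → ℝ and fixed x₀, the one-dimensional average-to-point conversion error satisfies: letting Q(x) := (1/h)·∫_{x−h/2}^{x+h/2} q, the quantity Q(x₀) − (1/1920)·(−9Q(x₀−2h) + 116Q(x₀−h) − 214Q(x₀) + 116Q(x₀+h) − 9Q(x₀+2h)) − q(x₀) is O(h⁶) as h → 0⁺. -/
open MeasureTheory Asymptotics Filter Set

lemma iterWithin_eq (g : ℝ → ℝ) (hg : ContDiff ℝ 7 g) (k : ℕ) (hk : k ≤ 7) :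
    iteratedDerivWithin k g (Icc (0:ℝ) 1) 0 = iteratedDeriv k g 0 := by
  have H : HasFTaylorSeriesUpToOn 7 g (ftaylorSeriesWithin ℝ g univ) univ :=
    (hg.contDiffOn).ftaylorSeriesWithin uniqueDiffOn_univ
  have H' := (H.mono (subset_univ (Icc (0:ℝ) 1))).eq_iteratedFDerivWithin_of_uniqueDiffOn
    (m := k) (by exact_mod_cast hk) (uniqueDiffOn_Icc one_pos)
    (mem_Icc.mpr ⟨le_refl 0, zero_le_one⟩)
  rw [iteratedDerivWithin_eq_iteratedFDerivWithin, ← H',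
    iteratedDeriv_eq_iteratedFDeriv]
  congr 1
  show iteratedFDerivWithin ℝ k g univ 0 = iteratedFDeriv ℝ k g 0
  rw [iteratedFDerivWithin_univ]

lemma taylor6 (F : ℝ → ℝ) (hF : ContDiff ℝ 7 F) (x₀ c : ℝ) :
    ∃ C : ℝ, ∀ h ∈ Set.Icc (0:ℝ) 1,
      |F (x₀ + c * h) -
        (iteratedDeriv 0 F x₀ + c * h * iteratedDeriv 1 F x₀
          + c^2 * h^2 / 2 * iteratedDeriv 2 F x₀ + c^3 * h^3 / 6 * iteratedDeriv 3 F x₀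
          + c^4 * h^4 / 24 * iteratedDeriv 4 F x₀ + c^5 * h^5 / 120 * iteratedDeriv 5 F x₀
          + c^6 * h^6 / 720 * iteratedDeriv 6 F x₀)| ≤ C * h ^ 7 := by
  set g : ℝ → ℝ := fun h => F (x₀ + c * h) with hgdef
  have hg : ContDiff ℝ 7 g := by
    have : ContDiff ℝ 7 (fun h : ℝ => x₀ + c * h) :=
      contDiff_const.add (contDiff_const.mul contDiff_id)
    exact hF.comp this
  obtain ⟨C, hC⟩ := exists_taylor_mean_remainder_bound (n := 6) zero_le_one
    (hg.contDiffOn (s := Icc 0 1))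
  refine ⟨C, fun h hh => ?_⟩
  have hb := hC h hh
  have hiter : ∀ k : ℕ, k ≤ 7 →
      iteratedDerivWithin k g (Icc (0:ℝ) 1) 0 = c ^ k * iteratedDeriv k F x₀ := by
    intro k hk
    rw [iterWithin_eq g hg k hk]
    have h2 : ContDiff ℝ (k:ℕ) (fun z => F (x₀ + z)) :=
      (hF.of_le (by exact_mod_cast hk)).comp (contDiff_const.add contDiff_id)
    have key := iteratedDeriv_comp_const_mul h2 c
    show iteratedDeriv k (fun z => F (x₀ + c * z)) 0 = _
    rw [show (fun z => F (x₀ + c * z)) = fun x => (fun z => F (x₀ + z)) (c * x) from rfl, key]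
    rw [iteratedDeriv_comp_const_add k F x₀]
    norm_num
  rw [taylor_within_apply] at hb
  simp only [Finset.sum_range_succ, Finset.sum_range_zero] at hb
  rw [hiter 0 (by norm_num), hiter 1 (by norm_num), hiter 2 (by norm_num),
    hiter 3 (by norm_num), hiter 4 (by norm_num), hiter 5 (by norm_num),
    hiter 6 (by norm_num)] at hb
  rw [Real.norm_eq_abs] at hb
  convert hb using 2
  · simp [Nat.factorial]
    ring
  · norm_num

set_option maxHeartbeats 2000000 in
theorem stmt_11 (q : ℝ → ℝ) (hq : ContDiff ℝ 6 q) (x₀ : ℝ)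
    (Q : ℝ → ℝ → ℝ)
    (hQ : Q = fun h x => (1 / h) * ∫ t in (x - h / 2)..(x + h / 2), q t) :
    (fun h : ℝ =>
        Q h x₀
          - (1 / 1920) * (-9 * Q h (x₀ - 2 * h) + 116 * Q h (x₀ - h) - 214 * Q h x₀
            + 116 * Q h (x₀ + h) - 9 * Q h (x₀ + 2 * h))
          - q x₀) =O[nhdsWithin 0 (Set.Ioi 0)] (fun h : ℝ => h ^ 6) := by
  set F : ℝ → ℝ := fun x => ∫ t in x₀..x, q t with hFdef
  have hd : ∀ x : ℝ, HasDerivAt F (q x) x :=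
    fun x => (hq.continuous.integral_hasStrictDerivAt x₀ x).hasDerivAt
  have hF : ContDiff ℝ 7 F := by
    have h7 : (7 : WithTop ℕ∞) = 6 + 1 := by norm_num
    rw [h7, contDiff_succ_iff_deriv]
    refine ⟨fun x => (hd x).differentiableAt, by simp, ?_⟩
    have : deriv F = q := funext fun x => (hd x).deriv
    rw [this]; exact hq
  have hD1 : iteratedDeriv 1 F x₀ = q x₀ := by
    rw [iteratedDeriv_one]; exact (hd x₀).deriv
  have hint : ∀ a b : ℝ, (∫ t in a..b, q t) = F b - F a := by
    intro a b
    have h1 := intervalIntegral.integral_add_adjacent_intervals (μ := volume)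
      (hq.continuous.intervalIntegrable a x₀) (hq.continuous.intervalIntegrable x₀ b)
    have h2 : (∫ t in a..x₀, q t) = -∫ t in x₀..a, q t :=
      intervalIntegral.integral_symm (f := q) (μ := volume) x₀ a
    have hFa : F a = ∫ t in x₀..a, q t := rfl
    have hFb : F b = ∫ t in x₀..b, q t := rfl
    rw [hFa, hFb]
    linarith
  have hQ' : ∀ h x : ℝ, Q h x = (1 / h) * (F (x + h / 2) - F (x - h / 2)) := by
    intro h x; rw [hQ]; simp only; rw [hint]
  obtain ⟨C1, hC1⟩ := taylor6 F hF x₀ (1/2)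
  obtain ⟨C2, hC2⟩ := taylor6 F hF x₀ (-(1/2))
  obtain ⟨C3, hC3⟩ := taylor6 F hF x₀ (3/2)
  obtain ⟨C4, hC4⟩ := taylor6 F hF x₀ (-(3/2))
  obtain ⟨C5, hC5⟩ := taylor6 F hF x₀ (5/2)
  obtain ⟨C6, hC6⟩ := taylor6 F hF x₀ (-(5/2))
  rw [Asymptotics.isBigO_iff]
  refine ⟨(2250*C1 + 2250*C2 + 125*C3 + 125*C4 + 9*C5 + 9*C6)/1920, ?_⟩
  filter_upwards [Ioo_mem_nhdsGT_of_mem (Set.mem_Ico.mpr ⟨le_refl (0:ℝ), zero_lt_one⟩)]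
    with h hh
  have hpos : 0 < h := hh.1
  have hmem : h ∈ Set.Icc (0:ℝ) 1 := ⟨hh.1.le, hh.2.le⟩
  have e1 := hC1 h hmem
  have e2 := hC2 h hmem
  have e3 := hC3 h hmem
  have e4 := hC4 h hmem
  have e5 := hC5 h hmem
  have e6 := hC6 h hmem
  set D0 := iteratedDeriv 0 F x₀
  set D1 := iteratedDeriv 1 F x₀
  set D2 := iteratedDeriv 2 F x₀
  set D3 := iteratedDeriv 3 F x₀
  set D4 := iteratedDeriv 4 F x₀
  set D5 := iteratedDeriv 5 F x₀
  set D6 := iteratedDeriv 6 F x₀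
  set r1 := F (x₀ + 1/2 * h) - (D0 + 1/2 * h * D1 + (1/2)^2 * h^2 / 2 * D2
    + (1/2)^3 * h^3 / 6 * D3 + (1/2)^4 * h^4 / 24 * D4 + (1/2)^5 * h^5 / 120 * D5
    + (1/2)^6 * h^6 / 720 * D6) with hr1
  set r2 := F (x₀ + -(1/2) * h) - (D0 + -(1/2) * h * D1 + (-(1/2))^2 * h^2 / 2 * D2
    + (-(1/2))^3 * h^3 / 6 * D3 + (-(1/2))^4 * h^4 / 24 * D4 + (-(1/2))^5 * h^5 / 120 * D5
    + (-(1/2))^6 * h^6 / 720 * D6) with hr2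
  set r3 := F (x₀ + 3/2 * h) - (D0 + 3/2 * h * D1 + (3/2)^2 * h^2 / 2 * D2
    + (3/2)^3 * h^3 / 6 * D3 + (3/2)^4 * h^4 / 24 * D4 + (3/2)^5 * h^5 / 120 * D5
    + (3/2)^6 * h^6 / 720 * D6) with hr3
  set r4 := F (x₀ + -(3/2) * h) - (D0 + -(3/2) * h * D1 + (-(3/2))^2 * h^2 / 2 * D2
    + (-(3/2))^3 * h^3 / 6 * D3 + (-(3/2))^4 * h^4 / 24 * D4 + (-(3/2))^5 * h^5 / 120 * D5
    + (-(3/2))^6 * h^6 / 720 * D6) with hr4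
  set r5 := F (x₀ + 5/2 * h) - (D0 + 5/2 * h * D1 + (5/2)^2 * h^2 / 2 * D2
    + (5/2)^3 * h^3 / 6 * D3 + (5/2)^4 * h^4 / 24 * D4 + (5/2)^5 * h^5 / 120 * D5
    + (5/2)^6 * h^6 / 720 * D6) with hr5
  set r6 := F (x₀ + -(5/2) * h) - (D0 + -(5/2) * h * D1 + (-(5/2))^2 * h^2 / 2 * D2
    + (-(5/2))^3 * h^3 / 6 * D3 + (-(5/2))^4 * h^4 / 24 * D4 + (-(5/2))^5 * h^5 / 120 * D5
    + (-(5/2))^6 * h^6 / 720 * D6) with hr6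
  have key : Q h x₀
      - (1 / 1920) * (-9 * Q h (x₀ - 2 * h) + 116 * Q h (x₀ - h) - 214 * Q h x₀
        + 116 * Q h (x₀ + h) - 9 * Q h (x₀ + 2 * h)) - q x₀
      = (1/h) * ((2250/1920)*r1 - (2250/1920)*r2 - (125/1920)*r3 + (125/1920)*r4
          + (9/1920)*r5 - (9/1920)*r6) := by
    rw [hQ' h x₀, hQ' h (x₀ - 2*h), hQ' h (x₀ - h), hQ' h (x₀ + h), hQ' h (x₀ + 2*h)]
    rw [hr1, hr2, hr3, hr4, hr5, hr6, ← hD1]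
    have a1 : x₀ + h/2 = x₀ + 1/2*h := by ring
    have a2 : x₀ - h/2 = x₀ + -(1/2)*h := by ring
    have a3 : x₀ - 2*h + h/2 = x₀ + -(3/2)*h := by ring
    have a4 : x₀ - 2*h - h/2 = x₀ + -(5/2)*h := by ring
    have a5 : x₀ - h + h/2 = x₀ + -(1/2)*h := by ring
    have a6 : x₀ - h - h/2 = x₀ + -(3/2)*h := by ring
    have a7 : x₀ + h + h/2 = x₀ + 3/2*h := by ring
    have a8 : x₀ + h - h/2 = x₀ + 1/2*h := by ring
    have a9 : x₀ + 2*h + h/2 = x₀ + 5/2*h := by ring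
    have a10 : x₀ + 2*h - h/2 = x₀ + 3/2*h := by ring
    rw [a1, a2, a3, a4, a5, a6, a7, a8, a9, a10]
    field_simp
    ring
  have b1 := abs_le.mp e1
  have b2 := abs_le.mp e2
  have b3 := abs_le.mp e3
  have b4 := abs_le.mp e4
  have b5 := abs_le.mp e5
  have b6 := abs_le.mp e6
  clear_value r1 r2 r3 r4 r5 r6
  have hS : |(2250/1920)*r1 - (2250/1920)*r2 - (125/1920)*r3 + (125/1920)*r4
      + (9/1920)*r5 - (9/1920)*r6|
      ≤ ((2250*C1 + 2250*C2 + 125*C3 + 125*C4 + 9*C5 + 9*C6)/1920) * h^7 := by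
    rw [abs_le]
    constructor <;>
      linarith [b1.1, b1.2, b2.1, b2.2, b3.1, b3.2, b4.1, b4.2, b5.1, b5.2, b6.1, b6.2]
  rw [key, Real.norm_eq_abs, Real.norm_eq_abs, abs_mul,
    abs_of_pos (show (0:ℝ) < 1/h by positivity),
    abs_of_pos (show (0:ℝ) < h^6 by positivity)]
  refine le_trans (mul_le_mul_of_nonneg_left hS (by positivity)) (le_of_eq ?_)
  field_simp
end

section
/- For a C⁶ function q : ℝ → ℝ and fixed x₀, the point-to-average formula error satisfies: letting Q(x₀) := (1/h)·∫_{x₀−h/2}^{x₀+h/2} q, the quantity q(x₀) + (1/5760)·(−17q(x₀−2h) + 308q(x₀−h) − 582q(x₀) + 308q(x₀+h) − 17q(x₀+2h)) − Q(x₀) is O(h⁶) as h → 0⁺. -/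
open MeasureTheory Asymptotics Filter Nat

open Set in
private lemma my_idw {f : ℝ → ℝ} (hf : ContDiff ℝ 6 f) {a b y : ℝ} (hab : a < b)
    (hy : y ∈ Set.Icc a b) {k : ℕ} (hk : k ≤ 6) :
    iteratedDerivWithin k f (Set.Icc a b) y = iteratedDeriv k f y := by
  have h6 : ContDiff ℝ ((6 : ℕ∞) : WithTop ℕ∞) f := by exact_mod_cast hf
  have hT := (contDiff_iff_ftaylorSeries.mp h6).hasFTaylorSeriesUpToOn (Set.Icc a b)
  rw [iteratedDerivWithin_eq_iteratedFDerivWithin, iteratedDeriv_eq_iteratedFDeriv]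
  congr 1
  exact (hT.eq_iteratedFDerivWithin_of_uniqueDiffOn (by exact_mod_cast hk)
    (uniqueDiffOn_Icc hab) hy).symm

private lemma my_onesided (f : ℝ → ℝ) (hf : ContDiff ℝ 6 f) (x₀ : ℝ) :
    ∃ C : ℝ, ∀ y ∈ Set.Icc x₀ (x₀ + 1), |f y - ∑ k ∈ Finset.range 6,
      (k ! : ℝ)⁻¹ * (y - x₀) ^ k * iteratedDeriv k f x₀| ≤ C * (y - x₀) ^ 6 := by
  have hab : x₀ < x₀ + 1 := by linarith
  have hcd : ContDiffOn ℝ ((5 : ℕ) + 1) f (Set.Icc x₀ (x₀ + 1)) := by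
    apply ContDiff.contDiffOn
    exact_mod_cast hf
  obtain ⟨C, hC⟩ := exists_taylor_mean_remainder_bound (n := 5) hab.le hcd
  refine ⟨C, fun y hy => ?_⟩
  have h2 := hC y hy
  have hsum : taylorWithinEval f 5 (Set.Icc x₀ (x₀ + 1)) x₀ y
      = ∑ k ∈ Finset.range 6, (k ! : ℝ)⁻¹ * (y - x₀) ^ k * iteratedDeriv k f x₀ := by
    rw [taylor_within_apply]
    apply Finset.sum_congr rfl
    intro k hk
    rw [smul_eq_mul,
      my_idw hf hab (Set.left_mem_Icc.2 hab.le)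
        (by have := Finset.mem_range.mp hk; omega : k ≤ 6)]
  rw [hsum, Real.norm_eq_abs] at h2
  norm_num at h2 ⊢
  exact h2

private lemma my_twosided (f : ℝ → ℝ) (hf : ContDiff ℝ 6 f) (x₀ : ℝ) :
    ∃ C : ℝ, 0 ≤ C ∧ ∀ y ∈ Set.Icc (x₀ - 1) (x₀ + 1), |f y - ∑ k ∈ Finset.range 6,
      (k ! : ℝ)⁻¹ * (y - x₀) ^ k * iteratedDeriv k f x₀| ≤ C * |y - x₀| ^ 6 := by
  obtain ⟨C₁, hC₁⟩ := my_onesided f hf x₀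
  have hgc : ContDiff ℝ 6 (fun y : ℝ => f (-y + 2 * x₀)) :=
    hf.comp ((contDiff_id.neg).add contDiff_const)
  obtain ⟨C₂, hC₂⟩ := my_onesided (fun y : ℝ => f (-y + 2 * x₀)) hgc x₀
  have hgd : ∀ k : ℕ, iteratedDeriv k (fun y : ℝ => f (-y + 2 * x₀)) x₀
      = (-1 : ℝ) ^ k * iteratedDeriv k f x₀ := by
    intro k
    have h1 := iteratedDeriv_comp_neg k (fun z : ℝ => f (z + 2 * x₀)) x₀
    rw [iteratedDeriv_comp_add_const] at h1
    have h2 : iteratedDeriv k (fun y : ℝ => f (-y + 2 * x₀)) x₀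
        = (-1 : ℝ) ^ k • iteratedDeriv k f (-x₀ + 2 * x₀) := h1
    rw [h2, smul_eq_mul]
    congr 2
    ring
  refine ⟨max (max C₁ C₂) 0, le_max_right _ _, fun y hy => ?_⟩
  have habs : |y - x₀| ^ 6 = |(y - x₀) ^ 6| := by rw [abs_pow]
  have hpw : (0:ℝ) ≤ (y - x₀) ^ 6 := by positivity
  rcases le_total x₀ y with hcase | hcase
  · have hb := hC₁ y ⟨hcase, hy.2⟩
    calc |f y - ∑ k ∈ Finset.range 6, (k ! : ℝ)⁻¹ * (y - x₀) ^ k * iteratedDeriv k f x₀|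
        ≤ C₁ * (y - x₀) ^ 6 := hb
      _ ≤ max (max C₁ C₂) 0 * |y - x₀| ^ 6 := by
          rw [habs, abs_of_nonneg hpw]
          exact mul_le_mul_of_nonneg_right ((le_max_left _ _).trans (le_max_left _ _)) hpw
  · have hz : -y + 2 * x₀ ∈ Set.Icc x₀ (x₀ + 1) := ⟨by linarith, by linarith [hy.1]⟩
    have hb := hC₂ _ hz
    have he1 : f (-(-y + 2 * x₀) + 2 * x₀) = f y := by norm_num
    have he2 : (∑ k ∈ Finset.range 6, (k ! : ℝ)⁻¹ * (-y + 2 * x₀ - x₀) ^ k *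
        iteratedDeriv k (fun y : ℝ => f (-y + 2 * x₀)) x₀)
        = ∑ k ∈ Finset.range 6, (k ! : ℝ)⁻¹ * (y - x₀) ^ k * iteratedDeriv k f x₀ := by
      apply Finset.sum_congr rfl
      intro k _
      rw [hgd k]
      rw [show (-y + 2 * x₀ - x₀ : ℝ) = -(y - x₀) by ring, neg_pow]
      rcases Nat.even_or_odd k with he | ho
      · rw [he.neg_one_pow]; ring
      · rw [ho.neg_one_pow]; ring
    rw [he1, he2] at hb
    calc |f y - ∑ k ∈ Finset.range 6, (k ! : ℝ)⁻¹ * (y - x₀) ^ k * iteratedDeriv k f x₀|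
        ≤ C₂ * (-y + 2 * x₀ - x₀) ^ 6 := hb
      _ = C₂ * (y - x₀) ^ 6 := by ring_nf
      _ ≤ max (max C₁ C₂) 0 * |y - x₀| ^ 6 := by
          rw [habs, abs_of_nonneg hpw]
          exact mul_le_mul_of_nonneg_right ((le_max_right _ _).trans (le_max_left _ _)) hpw

set_option maxHeartbeats 2000000 in
theorem stmt_12 (q : ℝ → ℝ) (hq : ContDiff ℝ 6 q) (x₀ : ℝ)
    (Q : ℝ → ℝ)
    (hQ : Q = fun h => (1 / h) * ∫ t in (x₀ - h / 2)..(x₀ + h / 2), q t) :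
    (fun h : ℝ =>
        q x₀
          + (1 / 5760) * (-17 * q (x₀ - 2 * h) + 308 * q (x₀ - h) - 582 * q x₀
            + 308 * q (x₀ + h) - 17 * q (x₀ + 2 * h))
          - Q h) =O[nhdsWithin 0 (Set.Ioi 0)] (fun h : ℝ => h ^ 6) := by
  subst hQ
  obtain ⟨c0, c1, c2, c3, c4, c5, hc0, hd⟩ : ∃ c0 c1 c2 c3 c4 c5 : ℝ, c0 = q x₀ ∧
      ∀ y : ℝ, (∑ k ∈ Finset.range 6, (k ! : ℝ)⁻¹ * (y - x₀) ^ k * iteratedDeriv k q x₀)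
        = c0 + c1 * (y - x₀) + c2 * (y - x₀) ^ 2 + c3 * (y - x₀) ^ 3
          + c4 * (y - x₀) ^ 4 + c5 * (y - x₀) ^ 5 := by
    refine ⟨iteratedDeriv 0 q x₀, iteratedDeriv 1 q x₀, iteratedDeriv 2 q x₀ / 2,
      iteratedDeriv 3 q x₀ / 6, iteratedDeriv 4 q x₀ / 24, iteratedDeriv 5 q x₀ / 120,
      by rw [iteratedDeriv_zero], fun y => ?_⟩
    simp [Finset.sum_range_succ, Nat.factorial]
    ring
  obtain ⟨C, hC0, hC⟩ := my_twosided q hq x₀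
  set T : ℝ → ℝ := fun y => c0 + c1 * (y - x₀) + c2 * (y - x₀) ^ 2 + c3 * (y - x₀) ^ 3
      + c4 * (y - x₀) ^ 4 + c5 * (y - x₀) ^ 5 with hTdef
  set r : ℝ → ℝ := fun y => q y - T y with hrdef
  have hCr : ∀ y ∈ Set.Icc (x₀ - 1) (x₀ + 1), |r y| ≤ C * |y - x₀| ^ 6 := by
    intro y hy
    have := hC y hy
    rw [hd y] at this
    exact this
  set Φ : ℝ → ℝ := fun y => c0 * (y - x₀) ^ 1 / 1 + c1 * (y - x₀) ^ 2 / 2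
      + c2 * (y - x₀) ^ 3 / 3 + c3 * (y - x₀) ^ 4 / 4 + c4 * (y - x₀) ^ 5 / 5
      + c5 * (y - x₀) ^ 6 / 6 with hΦdef
  have hTcont : Continuous T := by fun_prop
  have hrcont : Continuous r := hq.continuous.sub hTcont
  have hΦ : ∀ t : ℝ, HasDerivAt Φ (T t) t := by
    intro t
    have h1 : HasDerivAt (fun y : ℝ => y - x₀) 1 t := (hasDerivAt_id t).sub_const x₀
    have hp : ∀ n : ℕ, HasDerivAt (fun y : ℝ => (y - x₀) ^ n)
        ((n : ℝ) * (t - x₀) ^ (n - 1)) t := by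
      intro n
      simpa using h1.fun_pow n
    have H : HasDerivAt Φ
        (c0 * ((1 : ℝ) * (t - x₀) ^ (1 - 1)) / 1 + c1 * ((2 : ℝ) * (t - x₀) ^ (2 - 1)) / 2
          + c2 * ((3 : ℝ) * (t - x₀) ^ (3 - 1)) / 3 + c3 * ((4 : ℝ) * (t - x₀) ^ (4 - 1)) / 4
          + c4 * ((5 : ℝ) * (t - x₀) ^ (5 - 1)) / 5 + c5 * ((6 : ℝ) * (t - x₀) ^ (6 - 1)) / 6) t := by
      have := ((((((hp 1).const_mul c0).div_const 1).add
        (((hp 2).const_mul c1).div_const 2)).add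
        (((hp 3).const_mul c2).div_const 3)).add
        (((hp 4).const_mul c3).div_const 4)).add
        (((hp 5).const_mul c4).div_const 5)
      have h6 := this.add (((hp 6).const_mul c5).div_const 6)
      exact_mod_cast h6
    convert H using 1
    norm_num [hTdef]
    ring
  have hTint : ∀ a b : ℝ, (∫ t in a..b, T t) = Φ b - Φ a := fun a b =>
    intervalIntegral.integral_eq_sub_of_hasDerivAt (fun t _ => hΦ t)
      (hTcont.intervalIntegrable a b)
  have hqTr : ∀ a b : ℝ, (∫ t in a..b, q t) = (Φ b - Φ a) + ∫ t in a..b, r t := by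
    intro a b
    rw [← hTint a b,
      ← intervalIntegral.integral_add (hTcont.intervalIntegrable a b)
        (hrcont.intervalIntegrable a b)]
    apply intervalIntegral.integral_congr
    intro t _
    simp [hrdef]
  have hq1 : ∀ y : ℝ, q y = T y + r y := fun y => by simp [hrdef]
  have hTx0 : T x₀ = q x₀ := by simp [hTdef, hc0]
  rw [Asymptotics.isBigO_iff]
  refine ⟨2 * C, ?_⟩
  filter_upwards [Ioo_mem_nhdsGT_of_mem (Set.left_mem_Ico.mpr (by norm_num : (0:ℝ) < 1/2))]
    with h hh
  obtain ⟨hp0, hp2⟩ := hh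
  have hm1 : x₀ - 2 * h ∈ Set.Icc (x₀ - 1) (x₀ + 1) := ⟨by linarith, by linarith⟩
  have hm2 : x₀ - h ∈ Set.Icc (x₀ - 1) (x₀ + 1) := ⟨by linarith, by linarith⟩
  have hm3 : x₀ + h ∈ Set.Icc (x₀ - 1) (x₀ + 1) := ⟨by linarith, by linarith⟩
  have hm4 : x₀ + 2 * h ∈ Set.Icc (x₀ - 1) (x₀ + 1) := ⟨by linarith, by linarith⟩
  have hb1 := hCr _ hm1
  have hb2 := hCr _ hm2
  have hb3 := hCr _ hm3
  have hb4 := hCr _ hm4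
  rw [show x₀ - 2 * h - x₀ = -(2 * h) by ring, abs_neg, abs_of_pos (show (0:ℝ) < 2 * h by linarith),
    show ((2:ℝ) * h) ^ 6 = 64 * h ^ 6 by ring, show C * (64 * h ^ 6) = 64 * C * h ^ 6 by ring]
    at hb1
  rw [show x₀ - h - x₀ = -h by ring, abs_neg, abs_of_pos hp0] at hb2
  rw [show x₀ + h - x₀ = h by ring, abs_of_pos hp0] at hb3
  rw [show x₀ + 2 * h - x₀ = 2 * h by ring, abs_of_pos (show (0:ℝ) < 2 * h by linarith),
    show ((2:ℝ) * h) ^ 6 = 64 * h ^ 6 by ring, show C * (64 * h ^ 6) = 64 * C * h ^ 6 by ring]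
    at hb4
  have hIb : |∫ t in (x₀ - h / 2)..(x₀ + h / 2), r t| ≤ (C * h ^ 6) * h := by
    have := intervalIntegral.norm_integral_le_of_norm_le_const (C := C * h ^ 6)
      (f := r) (a := x₀ - h / 2) (b := x₀ + h / 2) ?_
    · rw [Real.norm_eq_abs] at this
      calc |∫ t in (x₀ - h / 2)..(x₀ + h / 2), r t|
          ≤ C * h ^ 6 * |x₀ + h / 2 - (x₀ - h / 2)| := this
        _ = C * h ^ 6 * h := by
            rw [show x₀ + h / 2 - (x₀ - h / 2) = h by ring, abs_of_pos hp0]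
    · intro t ht
      rw [Set.uIoc_of_le (by linarith)] at ht
      have h5 : |t - x₀| ≤ h := by
        rw [abs_le]
        exact ⟨by linarith [ht.1], by linarith [ht.2]⟩
      have h6 : t ∈ Set.Icc (x₀ - 1) (x₀ + 1) := ⟨by linarith [ht.1], by linarith [ht.2]⟩
      calc ‖r t‖ = |r t| := rfl
        _ ≤ C * |t - x₀| ^ 6 := hCr t h6
        _ ≤ C * h ^ 6 :=
            mul_le_mul_of_nonneg_left (pow_le_pow_left₀ (abs_nonneg _) h5 6) hC0
  have heq : q x₀
        + (1 / 5760) * (-17 * q (x₀ - 2 * h) + 308 * q (x₀ - h) - 582 * q x₀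
          + 308 * q (x₀ + h) - 17 * q (x₀ + 2 * h))
        - (1 / h) * ∫ t in (x₀ - h / 2)..(x₀ + h / 2), q t
      = (1 / 5760) * (-17 * r (x₀ - 2 * h) + 308 * r (x₀ - h)
          + 308 * r (x₀ + h) - 17 * r (x₀ + 2 * h))
        - (1 / h) * ∫ t in (x₀ - h / 2)..(x₀ + h / 2), r t := by
    rw [hqTr, hq1 (x₀ - 2 * h), hq1 (x₀ - h), hq1 (x₀ + h), hq1 (x₀ + 2 * h),
      show q x₀ = T x₀ from hTx0.symm]
    simp only [hTdef, hΦdef]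
    field_simp
    ring
  have hne : 0 < h := hp0
  set I := ∫ t in (x₀ - h / 2)..(x₀ + h / 2), r t with hI
  have hIu : 1 / h * I ≤ C * h ^ 6 := by
    have h7 : I ≤ C * h ^ 6 * h := (abs_le.mp hIb).2
    have := mul_le_mul_of_nonneg_left h7 (le_of_lt (by positivity : (0:ℝ) < 1 / h))
    calc 1 / h * I ≤ 1 / h * (C * h ^ 6 * h) := this
      _ = C * h ^ 6 := by field_simp
  have hIl : -(C * h ^ 6) ≤ 1 / h * I := by
    have h7 : -(C * h ^ 6 * h) ≤ I := (abs_le.mp hIb).1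
    have := mul_le_mul_of_nonneg_left h7 (le_of_lt (by positivity : (0:ℝ) < 1 / h))
    calc -(C * h ^ 6) = 1 / h * (-(C * h ^ 6 * h)) := by field_simp
      _ ≤ 1 / h * I := this
  rw [Real.norm_eq_abs, Real.norm_eq_abs, heq, abs_of_pos (by positivity : (0:ℝ) < h ^ 6)]
  have ha1 := abs_le.mp hb1
  have ha2 := abs_le.mp hb2
  have ha3 := abs_le.mp hb3
  have ha4 := abs_le.mp hb4
  clear_value T r Φ I
  rw [abs_le]
  constructor <;>
    linarith [ha1.1, ha1.2, ha2.1, ha2.2, ha3.1, ha3.2, ha4.1, ha4.2, hIu, hIl]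
end

section
/- For any polynomial q : ℝ → ℝ of degree at most 7 and h > 0, with Q(x) := (1/h)·∫_{x−h/2}^{x+h/2} q, the identity Q(x) = q(x) + (h²/24)·q''(x) + (h⁴/1920)·q''''(x) + (h⁶/322560)·q⁽⁶⁾(x) holds for all x. -/
open Polynomial MeasureTheory

lemma mono_aux (i : ℕ) (hi : i ≤ 7) (h x : ℝ) (hh : 0 < h) :
    (1/h) * ∫ t in (x - h/2)..(x + h/2), t^i =
      x^i + (h^2/24) * (Polynomial.derivative^[2] (X^i : ℝ[X])).eval x
          + (h^4/1920) * (Polynomial.derivative^[4] (X^i : ℝ[X])).eval x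
          + (h^6/322560) * (Polynomial.derivative^[6] (X^i : ℝ[X])).eval x := by
  have hne : h ≠ 0 := ne_of_gt hh
  interval_cases i <;>
  · rw [integral_pow]
    norm_num [Function.iterate_succ_apply', derivative_X_pow]
    try field_simp
    try ring

theorem stmt_15 (q : Polynomial ℝ) (hq : q.natDegree ≤ 7) (h : ℝ) (hh : 0 < h)
    (Q : ℝ → ℝ) (hQ : Q = fun x => (1 / h) * ∫ t in (x - h / 2)..(x + h / 2), q.eval t)
    (x : ℝ) :
    Q x = q.eval x + (h ^ 2 / 24) * (Polynomial.derivative^[2] q).eval x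
        + (h ^ 4 / 1920) * (Polynomial.derivative^[4] q).eval x
        + (h ^ 6 / 322560) * (Polynomial.derivative^[6] q).eval x := by
  have hlt : q.natDegree < 8 := by omega
  have hrep : q = ∑ i ∈ Finset.range 8, C (q.coeff i) * X ^ i := by
    conv_lhs => rw [q.as_sum_range' 8 hlt]
    simp [C_mul_X_pow_eq_monomial]
  -- evaluate integrand
  have heval : ∀ t : ℝ, q.eval t = ∑ i ∈ Finset.range 8, q.coeff i * t ^ i :=
    fun t => q.eval_eq_sum_range' hlt t
  subst hQ
  simp only [heval]
  rw [intervalIntegral.integral_finset_sum (f := fun i t => q.coeff i * t ^ i) (fun i _ =>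
    ((continuous_const.mul (continuous_pow i) : Continuous fun t : ℝ => q.coeff i * t ^ i).intervalIntegrable _ _))]
  rw [Finset.mul_sum]
  have hlhs : ∀ i ∈ Finset.range 8,
      1 / h * ∫ t in (x - h/2)..(x + h/2), q.coeff i * t ^ i
        = q.coeff i * (x^i + (h^2/24) * (Polynomial.derivative^[2] (X^i : ℝ[X])).eval x
          + (h^4/1920) * (Polynomial.derivative^[4] (X^i : ℝ[X])).eval x
          + (h^6/322560) * (Polynomial.derivative^[6] (X^i : ℝ[X])).eval x) := by
    intro i hi
    rw [intervalIntegral.integral_const_mul, ← mono_aux i (by simpa using Nat.lt_succ_iff.mp (Finset.mem_range.mp hi)) h x hh]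
    ring
  rw [Finset.sum_congr rfl hlhs]
  conv_rhs => rw [hrep]
  simp only [iterate_derivative_sum, iterate_derivative_C_mul, eval_finset_sum, eval_mul,
    eval_C, eval_pow, eval_X, Finset.mul_sum]
  rw [← Finset.sum_add_distrib, ← Finset.sum_add_distrib, ← Finset.sum_add_distrib]
  exact Finset.sum_congr rfl (fun i _ => by rw [← hrep]; ring)
end
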